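/- arXiv:2404.04301 — 2 statements merged into one kernel-verified Lean document; each statement's English description precedes it below -/
import Mathlib

section
/- For all real x, erfc''(x)·erfc(x) - (erfc'(x))² ≤ 0, i.e., (4x/√π)e^{-x²}·erfc(x) ≤ (4/π)e^{-2x²}. -/
noncomputable def erfc (x : ℝ) : ℝ :=
  1 - (2 / Real.sqrt Real.pi) * ∫ t in (0:ℝ)..x, Real.exp (-t ^ 2)

open MeasureTheory Set Filter Topology

lemma gauss_integrableOn (x : ℝ) :
    IntegrableOn (fun t : ℝ => Real.exp (-t ^ 2)) (Ioi x) := by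
  have := (integrable_exp_neg_mul_sq (one_pos)).integrableOn (s := Ioi x)
  simpa using this

lemma gauss_exp_tendsto : Tendsto (fun t : ℝ => -Real.exp (-t ^ 2) / 2) atTop (𝓝 0) := by
  have h1 : Tendsto (fun t : ℝ => -t ^ 2) atTop atBot := by
    exact tendsto_neg_atBot_iff.mpr (tendsto_pow_atTop (two_ne_zero) : Tendsto (fun t : ℝ => t ^ 2) atTop atTop)
  have h2 : Tendsto (fun t : ℝ => Real.exp (-t ^ 2)) atTop (𝓝 0) :=
    Real.tendsto_exp_atBot.comp h1
  have := (h2.neg).div_const 2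
  simpa using this

lemma gauss_deriv (t : ℝ) :
    HasDerivAt (fun t : ℝ => -Real.exp (-t ^ 2) / 2) (t * Real.exp (-t ^ 2)) t := by
  have h1 : HasDerivAt (fun t : ℝ => -t ^ 2) (-(2 * t)) t := by
    simpa using ((hasDerivAt_pow 2 t).fun_neg)
  have h2 := (Real.hasDerivAt_exp (-t ^ 2)).comp t h1
  have h3 := (h2.fun_neg).div_const 2
  refine h3.congr_deriv ?_
  ring

lemma gauss_tail_integral {x : ℝ} (hx : 0 < x) :
    ∫ t in Ioi x, t * Real.exp (-t ^ 2) = Real.exp (-x ^ 2) / 2 := by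
  have hpos : ∀ t ∈ Ioi x, 0 ≤ t * Real.exp (-t ^ 2) := fun t ht =>
    mul_nonneg (le_of_lt (hx.trans ht)) (Real.exp_pos _).le
  have := integral_Ioi_of_hasDerivAt_of_nonneg' (g := fun t : ℝ => -Real.exp (-t ^ 2) / 2)
    (a := x) (l := 0) (fun t _ => gauss_deriv t) hpos gauss_exp_tendsto
  rw [this]; ring

lemma gauss_tail_integrable {x : ℝ} (hx : 0 < x) :
    IntegrableOn (fun t : ℝ => t * Real.exp (-t ^ 2)) (Ioi x) := by
  have hpos : ∀ t ∈ Ioi x, 0 ≤ t * Real.exp (-t ^ 2) := fun t ht =>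
    mul_nonneg (le_of_lt (hx.trans ht)) (Real.exp_pos _).le
  exact integrableOn_Ioi_deriv_of_nonneg' (g := fun t : ℝ => -Real.exp (-t ^ 2) / 2)
    (fun t _ => gauss_deriv t) hpos gauss_exp_tendsto

lemma gauss_tail_bound {x : ℝ} (hx : 0 < x) :
    ∫ t in Ioi x, Real.exp (-t ^ 2) ≤ Real.exp (-x ^ 2) / (2 * x) := by
  have h1 : ∫ t in Ioi x, Real.exp (-t ^ 2) ≤ ∫ t in Ioi x, (t / x) * Real.exp (-t ^ 2) := by
    apply setIntegral_mono_on (gauss_integrableOn x)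
    · have := (gauss_tail_integrable hx).div_const x
      exact IntegrableOn.congr_fun this (fun t _ => by ring) measurableSet_Ioi
    · exact measurableSet_Ioi
    · intro t ht
      have h : (1 : ℝ) ≤ t / x := (one_le_div hx).mpr (le_of_lt ht)
      nlinarith [Real.exp_pos (-t ^ 2)]
  have h2 : ∫ t in Ioi x, (t / x) * Real.exp (-t ^ 2)
      = (1 / x) * ∫ t in Ioi x, t * Real.exp (-t ^ 2) := by
    rw [← integral_const_mul]
    exact setIntegral_congr_fun measurableSet_Ioi (fun t _ => by ring)
  calc ∫ t in Ioi x, Real.exp (-t ^ 2) ≤ (1 / x) * ∫ t in Ioi x, t * Real.exp (-t ^ 2) := by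
        rw [← h2]; exact h1
    _ = Real.exp (-x ^ 2) / (2 * x) := by rw [gauss_tail_integral hx]; field_simp

lemma erfc_eq_tail {x : ℝ} (hx : 0 < x) :
    erfc x = (2 / Real.sqrt Real.pi) * ∫ t in Ioi x, Real.exp (-t ^ 2) := by
  have hsplit : (∫ t in Ioc 0 x, Real.exp (-t ^ 2)) + ∫ t in Ioi x, Real.exp (-t ^ 2)
      = ∫ t in Ioi (0:ℝ), Real.exp (-t ^ 2) := by
    rw [← setIntegral_union (Set.Ioc_disjoint_Ioi le_rfl) measurableSet_Ioi
      ((gauss_integrableOn 0).mono_set Ioc_subset_Ioi_self) (gauss_integrableOn x)]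
    rw [Set.Ioc_union_Ioi_eq_Ioi hx.le]
  have hgauss : ∫ t in Ioi (0:ℝ), Real.exp (-t ^ 2) = Real.sqrt Real.pi / 2 := by
    have := integral_gaussian_Ioi 1
    simpa using this
  have hIoc : ∫ t in (0:ℝ)..x, Real.exp (-t ^ 2) = ∫ t in Ioc 0 x, Real.exp (-t ^ 2) :=
    intervalIntegral.integral_of_le hx.le
  have hsqrt : Real.sqrt Real.pi ≠ 0 := by positivity
  rw [erfc, hIoc]
  have : (∫ t in Ioc 0 x, Real.exp (-t ^ 2))
      = Real.sqrt Real.pi / 2 - ∫ t in Ioi x, Real.exp (-t ^ 2) := by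
    rw [← hgauss, ← hsplit]; ring
  rw [this]
  field_simp
  ring

lemma erfc_upper {x : ℝ} (hx : 0 < x) :
    erfc x ≤ Real.exp (-x ^ 2) / (x * Real.sqrt Real.pi) := by
  rw [erfc_eq_tail hx]
  have hsqrt : 0 < Real.sqrt Real.pi := Real.sqrt_pos.mpr Real.pi_pos
  have := gauss_tail_bound hx
  calc (2 / Real.sqrt Real.pi) * ∫ t in Ioi x, Real.exp (-t ^ 2)
      ≤ (2 / Real.sqrt Real.pi) * (Real.exp (-x ^ 2) / (2 * x)) := by
        apply mul_le_mul_of_nonneg_left this (by positivity)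
    _ = Real.exp (-x ^ 2) / (x * Real.sqrt Real.pi) := by field_simp

theorem erfc_log_second_deriv_nonpos (x : ℝ) :
    (4 * x / Real.sqrt Real.pi) * Real.exp (-x ^ 2) * erfc x
      ≤ (4 / Real.pi) * Real.exp (-2 * x ^ 2) := by
  have hsqrt : 0 < Real.sqrt Real.pi := Real.sqrt_pos.mpr Real.pi_pos
  have hsq : Real.sqrt Real.pi * Real.sqrt Real.pi = Real.pi :=
    Real.mul_self_sqrt Real.pi_pos.le
  have hexp2 : Real.exp (-x ^ 2) * Real.exp (-x ^ 2) = Real.exp (-2 * x ^ 2) := by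
    rw [← Real.exp_add]; ring_nf
  rcases le_or_gt x 0 with hx | hx
  · -- x ≤ 0 : LHS ≤ 0 ≤ RHS, since erfc x ≥ 0 here (interval integral ≤ 0)
    have hint : (∫ t in (0:ℝ)..x, Real.exp (-t ^ 2)) ≤ 0 := by
      rw [intervalIntegral.integral_symm]
      simp only [neg_nonpos]
      apply intervalIntegral.integral_nonneg hx
      intro t _; exact (Real.exp_pos _).le
    have herfc : 0 ≤ erfc x := by
      unfold erfc
      nlinarith [div_pos (by norm_num : (0:ℝ) < 2) hsqrt]
    have hL : (4 * x / Real.sqrt Real.pi) * Real.exp (-x ^ 2) * erfc x ≤ 0 := by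
      apply mul_nonpos_of_nonpos_of_nonneg _ herfc
      apply mul_nonpos_of_nonpos_of_nonneg _ (Real.exp_pos _).le
      exact div_nonpos_of_nonpos_of_nonneg (by linarith) hsqrt.le
    have hR : 0 ≤ (4 / Real.pi) * Real.exp (-2 * x ^ 2) := by positivity
    linarith
  · have h := erfc_upper hx
    have herfc0 : 0 ≤ erfc x := by
      rw [erfc_eq_tail hx]
      apply mul_nonneg (by positivity)
      apply setIntegral_nonneg measurableSet_Ioi
      intro t _; exact (Real.exp_pos _).le
    have hcoef : 0 ≤ (4 * x / Real.sqrt Real.pi) * Real.exp (-x ^ 2) := by positivity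
    calc (4 * x / Real.sqrt Real.pi) * Real.exp (-x ^ 2) * erfc x
        ≤ (4 * x / Real.sqrt Real.pi) * Real.exp (-x ^ 2)
            * (Real.exp (-x ^ 2) / (x * Real.sqrt Real.pi)) :=
          mul_le_mul_of_nonneg_left h hcoef
      _ = (4 / Real.pi) * Real.exp (-2 * x ^ 2) := by
          rw [← hexp2, ← hsq]
          field_simp
          rw [Real.sqrt_sq hsqrt.le]
end

section
/- For x ≥ 25, |ln(erfc(x)) - (-x² + ln(1 - 1/(2x²)) - ln(√π·x))| ≤ 3/(4x⁴). -/
open Real MeasureTheory Set Filter Topology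

lemma integrable_g : Integrable (fun t : ℝ => Real.exp (-t ^ 2)) := by
  simpa using integrable_exp_neg_mul_sq (b := 1) one_pos

lemma erfc_eq (x : ℝ) (hx : 0 ≤ x) :
    erfc x = (2 / Real.sqrt Real.pi) * ∫ t in Ioi x, Real.exp (-t ^ 2) := by
  have hpi : (0:ℝ) < Real.sqrt Real.pi := Real.sqrt_pos.2 Real.pi_pos
  have h1 : ∫ t in Ioi (0:ℝ), Real.exp (-t ^ 2) = Real.sqrt Real.pi / 2 := by
    have := integral_gaussian_Ioi 1
    simpa using this
  have hsplit : (∫ t in (0:ℝ)..x, Real.exp (-t ^ 2)) + ∫ t in Ioi x, Real.exp (-t ^ 2)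
      = Real.sqrt Real.pi / 2 := by
    rw [intervalIntegral.integral_of_le hx, ← h1,
      ← setIntegral_union (Ioc_disjoint_Ioi le_rfl) measurableSet_Ioi
        integrable_g.integrableOn integrable_g.integrableOn, Ioc_union_Ioi_eq_Ioi hx]
  have : (2 / Real.sqrt Real.pi) * (Real.sqrt Real.pi / 2) = 1 := by
    field_simp
  unfold erfc
  nlinarith [hsplit]

noncomputable def Pfun (t : ℝ) : ℝ := (16*t^8 - 8*t^6 + 12*t^4 - 30*t^2 + 105)/(32*t^9)
noncomputable def Qfun (t : ℝ) : ℝ := (2*t^2 - 1)/(4*t^3)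

lemma hexp (t : ℝ) : HasDerivAt (fun s : ℝ => Real.exp (-s^2)) (Real.exp (-t^2) * (-(2*t))) t := by
  have h2 : HasDerivAt (fun s : ℝ => -s^2) (-(2*t)) t := by
    simpa using (hasDerivAt_pow 2 t).fun_neg
  exact (Real.hasDerivAt_exp _).comp t h2

lemma hasDerivAt_U (t : ℝ) (ht : 0 < t) :
    HasDerivAt (fun s : ℝ => -(Real.exp (-s^2) * Pfun s))
      (Real.exp (-t^2) * ((32*t^10 + 945)/(32*t^10))) t := by
  have hden : HasDerivAt (fun s : ℝ => 32*s^9) (32*(9*t^8)) t := by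
    simpa using (hasDerivAt_pow 9 t).const_mul 32
  have hnum : HasDerivAt (fun s : ℝ => 16*s^8 - 8*s^6 + 12*s^4 - 30*s^2 + 105)
      (16*(8*t^7) - 8*(6*t^5) + 12*(4*t^3) - 30*(2*t)) t := by
    have h8 := (hasDerivAt_pow 8 t).const_mul 16
    have h6 := (hasDerivAt_pow 6 t).const_mul 8
    have h4 := (hasDerivAt_pow 4 t).const_mul 12
    have h2 := (hasDerivAt_pow 2 t).const_mul 30
    simpa using (((h8.sub h6).add h4).sub h2).add_const 105
  have hden0 : (32*t^9 : ℝ) ≠ 0 := by positivity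
  have hP := hnum.fun_div hden hden0
  have h := ((hexp t).fun_mul hP).fun_neg
  refine h.congr_deriv ?_
  have ht0 : t ≠ 0 := ne_of_gt ht
  field_simp
  ring

lemma hasDerivAt_L (t : ℝ) (ht : 0 < t) :
    HasDerivAt (fun s : ℝ => -(Real.exp (-s^2) * Qfun s))
      (Real.exp (-t^2) * ((4*t^4 - 3)/(4*t^4))) t := by
  have hden : HasDerivAt (fun s : ℝ => 4*s^3) (4*(3*t^2)) t := by
    simpa using (hasDerivAt_pow 3 t).const_mul 4
  have hnum : HasDerivAt (fun s : ℝ => 2*s^2 - 1) (2*(2*t)) t := by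
    simpa using ((hasDerivAt_pow 2 t).const_mul 2).sub_const 1
  have hden0 : (4*t^3 : ℝ) ≠ 0 := by positivity
  have hQ := hnum.fun_div hden hden0
  have h := ((hexp t).fun_mul hQ).fun_neg
  refine h.congr_deriv ?_
  have ht0 : t ≠ 0 := ne_of_gt ht
  field_simp
  ring

lemma Pnonneg (y : ℝ) (hy : 1 ≤ y) : 0 ≤ Pfun y := by
  have hy0 : (0:ℝ) ≤ y := by linarith
  have h1 : 0 ≤ y^6 * (2*y^2 - 1) := mul_nonneg (by positivity) (by nlinarith)
  have h2 : (0:ℝ) ≤ 12*y^4 - 30*y^2 + 105 := by nlinarith [sq_nonneg (2*y^2 - 3)]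
  unfold Pfun
  apply div_nonneg _ (by positivity)
  nlinarith


lemma intT (x : ℝ) (hx : 1 ≤ x) :
    Tendsto (fun y => ∫ t in x..y, Real.exp (-t^2)) atTop
      (𝓝 (∫ t in Ioi x, Real.exp (-t^2))) :=
  intervalIntegral_tendsto_integral_Ioi x integrable_g.integrableOn tendsto_id

lemma integral_Ioi_le (x : ℝ) (hx : 1 ≤ x) :
    ∫ t in Ioi x, Real.exp (-t^2) ≤ Real.exp (-x^2) * Pfun x := by
  refine le_of_tendsto (intT x hx) ?_
  filter_upwards [eventually_ge_atTop x] with y hy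
  have hint2 : IntervalIntegrable (fun t : ℝ => Real.exp (-t^2) * ((32*t^10 + 945)/(32*t^10)))
      volume x y := by
    apply ContinuousOn.intervalIntegrable
    apply ContinuousOn.mul (by fun_prop)
    apply ContinuousOn.div (by fun_prop) (by fun_prop)
    intro t ht
    rw [uIcc_of_le hy] at ht
    have : 0 < t := lt_of_lt_of_le (by linarith) ht.1
    positivity
  have heq : ∫ t in x..y, Real.exp (-t^2) * ((32*t^10 + 945)/(32*t^10))
      = (-(Real.exp (-y^2) * Pfun y)) - (-(Real.exp (-x^2) * Pfun x)) := by
    refine intervalIntegral.integral_eq_sub_of_hasDerivAt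
      (f := fun s => -(Real.exp (-s^2) * Pfun s)) (fun t ht => ?_) hint2
    rw [uIcc_of_le hy] at ht
    exact hasDerivAt_U t (lt_of_lt_of_le (by linarith) ht.1)
  have hmono : ∫ t in x..y, Real.exp (-t^2)
      ≤ ∫ t in x..y, Real.exp (-t^2) * ((32*t^10 + 945)/(32*t^10)) := by
    refine intervalIntegral.integral_mono_on hy integrable_g.intervalIntegrable hint2
      (fun t ht => ?_)
    have ht0 : (1:ℝ) ≤ t := le_trans hx ht.1
    have h1 : (1:ℝ) ≤ (32*t^10 + 945)/(32*t^10) := by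
      rw [le_div_iff₀ (by positivity)]
      nlinarith
    nlinarith [Real.exp_pos (-t^2)]
  have hPy : 0 ≤ Real.exp (-y^2) * Pfun y := by
    have := Pnonneg y (le_trans hx hy)
    positivity
  linarith

lemma integral_Ioi_ge (x : ℝ) (hx : 1 ≤ x) :
    Real.exp (-x^2) * Qfun x ≤ ∫ t in Ioi x, Real.exp (-t^2) := by
  have hL0 : Tendsto (fun y => Real.exp (-y^2) * Qfun y) atTop (𝓝 0) := by
    apply squeeze_zero' (g := fun y => Real.exp (-y))
    · filter_upwards [eventually_ge_atTop (1:ℝ)] with y hy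
      have : 0 ≤ Qfun y := by
        unfold Qfun; apply div_nonneg _ (by positivity); nlinarith
      positivity
    · filter_upwards [eventually_ge_atTop (1:ℝ)] with y hy
      have h1 : Qfun y ≤ 1 := by
        unfold Qfun; rw [div_le_one (by positivity)]; nlinarith
      have h2 : Real.exp (-y^2) ≤ Real.exp (-y) := Real.exp_le_exp.2 (by nlinarith)
      have h3 : 0 ≤ Qfun y := by
        unfold Qfun; apply div_nonneg _ (by positivity); nlinarith
      nlinarith [Real.exp_pos (-y^2)]
    · exact Real.tendsto_exp_neg_atTop_nhds_zero
  have hT : Tendsto (fun y => Real.exp (-x^2) * Qfun x - Real.exp (-y^2) * Qfun y) atTop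
      (𝓝 (Real.exp (-x^2) * Qfun x)) := by
    simpa using (tendsto_const_nhds (x := Real.exp (-x^2) * Qfun x)).sub hL0
  refine le_of_tendsto_of_tendsto hT (intT x hx) ?_
  filter_upwards [eventually_ge_atTop x] with y hy
  · have hint2 : IntervalIntegrable (fun t : ℝ => Real.exp (-t^2) * ((4*t^4 - 3)/(4*t^4)))
        volume x y := by
      apply ContinuousOn.intervalIntegrable
      apply ContinuousOn.mul (by fun_prop)
      apply ContinuousOn.div (by fun_prop) (by fun_prop)
      intro t ht
      rw [uIcc_of_le hy] at ht
      have : 0 < t := lt_of_lt_of_le (by linarith) ht.1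
      positivity
    have heq : ∫ t in x..y, Real.exp (-t^2) * ((4*t^4 - 3)/(4*t^4))
        = (-(Real.exp (-y^2) * Qfun y)) - (-(Real.exp (-x^2) * Qfun x)) := by
      refine intervalIntegral.integral_eq_sub_of_hasDerivAt
        (f := fun s => -(Real.exp (-s^2) * Qfun s)) (fun t ht => ?_) hint2
      rw [uIcc_of_le hy] at ht
      exact hasDerivAt_L t (lt_of_lt_of_le (by linarith) ht.1)
    have hmono : ∫ t in x..y, Real.exp (-t^2) * ((4*t^4 - 3)/(4*t^4))
        ≤ ∫ t in x..y, Real.exp (-t^2) := by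
      refine intervalIntegral.integral_mono_on hy hint2 integrable_g.intervalIntegrable
        (fun t ht => ?_)
      have ht0 : (1:ℝ) ≤ t := le_trans hx ht.1
      have h1 : (4*t^4 - 3)/(4*t^4) ≤ 1 := by
        rw [div_le_one (by positivity)]; nlinarith
      nlinarith [Real.exp_pos (-t^2)]
    linarith


theorem log_erfc_approx_error (x : ℝ) (hx : 25 ≤ x) :
    |Real.log (erfc x)
        - (-x ^ 2 + Real.log (1 - 1 / (2 * x ^ 2)) - Real.log (Real.sqrt Real.pi * x))|
      ≤ 3 / (4 * x ^ 4) := by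
  have hx1 : (1:ℝ) ≤ x := by linarith
  have hx0 : (0:ℝ) < x := by linarith
  have hpi : (0:ℝ) < Real.sqrt Real.pi := Real.sqrt_pos.2 Real.pi_pos
  have hc : (0:ℝ) < 2 / Real.sqrt Real.pi := by positivity
  set c := 2 / Real.sqrt Real.pi with hcdef
  set J := ∫ t in Ioi x, Real.exp (-t ^ 2) with hJdef
  have herfc : erfc x = c * J := erfc_eq x (by linarith)
  have hQpos : 0 < Qfun x := by
    unfold Qfun; apply div_pos (by nlinarith) (by positivity)
  have hPpos : 0 < Pfun x := by
    have h6 : (0:ℝ) ≤ x^6*(2*x^2-1) := mul_nonneg (by positivity) (by nlinarith)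
    unfold Pfun
    apply div_pos _ (by positivity)
    nlinarith [sq_nonneg (2*x^2-3)]
  have hJge : Real.exp (-x^2) * Qfun x ≤ J := integral_Ioi_ge x hx1
  have hJle : J ≤ Real.exp (-x^2) * Pfun x := integral_Ioi_le x hx1
  set A := c * (Real.exp (-x^2) * Qfun x) with hAdef
  have hApos : 0 < A := by positivity
  have herfc_pos : 0 < erfc x := by
    rw [herfc]
    calc (0:ℝ) < A := hApos
    _ ≤ c * J := by
        apply mul_le_mul_of_nonneg_left hJge hc.le
  have hlogA : Real.log A
      = -x ^ 2 + Real.log (1 - 1 / (2 * x ^ 2)) - Real.log (Real.sqrt Real.pi * x) := by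
    have hA : A = Real.exp (-x^2) * (1 - 1/(2*x^2)) / (Real.sqrt Real.pi * x) := by
      rw [hAdef, hcdef]; unfold Qfun
      field_simp
      ring
    have h1 : (0:ℝ) < 1 - 1/(2*x^2) := by
      rw [sub_pos, div_lt_one (by positivity)]; nlinarith
    rw [hA, Real.log_div (by positivity) (by positivity),
      Real.log_mul (Real.exp_ne_zero _) (ne_of_gt h1), Real.log_exp]
  -- lower bound : log A ≤ log erfc
  have hlow : Real.log A ≤ Real.log (erfc x) := by
    apply Real.log_le_log hApos
    rw [herfc]
    exact mul_le_mul_of_nonneg_left hJge hc.le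
  -- upper bound
  have hratio : Pfun x / Qfun x ≤ 1 + 3/(4*x^4) := by
    have heq : (1 + 3/(4*x^4)) * Qfun x = (16*x^8-8*x^6+12*x^4-6*x^2)/(32*x^9) := by
      unfold Qfun; field_simp; ring
    have h : Pfun x ≤ (1 + 3/(4*x^4)) * Qfun x := by
      rw [heq]
      unfold Pfun
      gcongr
      nlinarith
    rw [div_le_iff₀ hQpos]
    linarith
  have hup : Real.log (erfc x) ≤ Real.log A + 3/(4*x^4) := by
    have h1 : Real.log (erfc x) ≤ Real.log (c * (Real.exp (-x^2) * Pfun x)) := by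
      apply Real.log_le_log herfc_pos
      rw [herfc]
      exact mul_le_mul_of_nonneg_left hJle hc.le
    have h2 : c * (Real.exp (-x^2) * Pfun x) = A * (Pfun x / Qfun x) := by
      rw [hAdef]
      field_simp
    have h3 : Real.log (c * (Real.exp (-x^2) * Pfun x))
        = Real.log A + Real.log (Pfun x / Qfun x) := by
      rw [h2, Real.log_mul (ne_of_gt hApos) (ne_of_gt (div_pos hPpos hQpos))]
    have h4 : Real.log (Pfun x / Qfun x) ≤ 3/(4*x^4) := by
      calc Real.log (Pfun x / Qfun x) ≤ Pfun x / Qfun x - 1 :=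
            Real.log_le_sub_one_of_pos (div_pos hPpos hQpos)
      _ ≤ 3/(4*x^4) := by linarith
    linarith
  rw [abs_le]
  constructor
  · have h : (0:ℝ) < 3 / (4 * x ^ 4) := by positivity
    have : 3/(4*x^4) = 3/(4*x^4) := rfl
    nlinarith [hlow, hlogA]
  · have : (3:ℝ)/(4*x^4) = 3/(4*x^4) := rfl
    nlinarith [hup, hlogA]
end
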